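/- Let c > 0 and b ≥ 0, and let f(t) = t * log((t+1)/t) for t > 0. If t > 0 satisfies c·t − b ≤ f(t), then t ≤ 1/(e^c − 1) + b/(1 − e^{−c}). -/
import Mathlib


theorem lemma4_convexity_bound (c b t : ℝ) (hc : 0 < c) (hb : 0 ≤ b) (ht : 0 < t)
    (h : c * t - b ≤ t * Real.log ((t + 1) / t)) :
    t ≤ 1 / (Real.exp c - 1) + b / (1 - Real.exp (-c)) := by
  set s := Real.exp (-c) with hs
  have hs0 : 0 < s := Real.exp_pos _
  have hs1 : s < 1 := by
    rw [hs]
    have := Real.exp_lt_exp.mpr (show -c < 0 by linarith)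
    simpa using this
  have hx : 0 < (t + 1) / t := by positivity
  -- log((t+1)/t) = c + log(((t+1)/t)*s)
  have hkey : Real.log ((t + 1) / t) ≤ c + (((t + 1) / t) * s - 1) := by
    have h1 : Real.log ((t + 1) / t * s) ≤ (t + 1) / t * s - 1 :=
      Real.log_le_sub_one_of_pos (by positivity)
    have h2 : Real.log ((t + 1) / t * s) = Real.log ((t + 1) / t) + (-c) := by
      rw [Real.log_mul (ne_of_gt hx) (ne_of_gt hs0), hs, Real.log_exp]
    linarith
  have hmul : t * Real.log ((t + 1) / t) ≤ t * (c + (((t + 1) / t) * s - 1)) :=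
    mul_le_mul_of_nonneg_left hkey ht.le
  have ht' : t * (((t + 1) / t) * s) = (t + 1) * s := by
    field_simp
  have h3 : t * (1 - s) ≤ b + s := by
    have := h.trans hmul
    have expand : t * (c + (((t + 1) / t) * s - 1)) = c * t + (t + 1) * s - t := by
      rw [mul_add, mul_sub, ht']; ring
    rw [expand] at this
    linarith
  have hden : 0 < 1 - s := by linarith
  have h4 : t ≤ (b + s) / (1 - s) := (le_div_iff₀ hden).mpr h3
  have hec : Real.exp c - 1 > 0 := by
    nlinarith [Real.add_one_le_exp c]
  have heq : (b + s) / (1 - s) = 1 / (Real.exp c - 1) + b / (1 - s) := by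
    have hse : s * Real.exp c = 1 := by
      rw [hs, ← Real.exp_add]; simp
    field_simp
    nlinarith [hse]
  linarith [h4, heq ▸ h4]
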